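/- Theorem 3.4: Let G be a symmetric 2×2 real matrix and F = J · G the matrix of the associated operator. If (tr F)² = 4·det F and G₀₀ + G₁₁ > 0, then there exist an invertible 2×2 real matrix S and a real number a such that Sᵀ · J · S is the matrix with rows (0, 1) and (1, 0), and Sᵀ · G · S is the matrix with rows (1, a) and (a, 0). -/

import Mathlib

open Matrix

/-- The Minkowski metric matrix `diag(1, -1)`. -/
def Jmat : Matrix (Fin 2) (Fin 2) ℝ := !![1, 0; 0, -1]

lemma key_lemma (G : Matrix (Fin 2) (Fin 2) ℝ) (e : ℝ) (he : e ^ 2 = 1)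
    (hq : G 1 0 = G 0 1) (hsum : G 0 0 + G 1 1 = 2 * e * G 0 1)
    (hpos : G 0 0 + G 1 1 > 0) :
    ∃ S : Matrix (Fin 2) (Fin 2) ℝ, ∃ a : ℝ, IsUnit S ∧
      Sᵀ * Jmat * S = !![0, 1; 1, 0] ∧ Sᵀ * G * S = !![1, a; a, 0] := by
  set p := G 0 0 with hp
  set q := G 0 1 with hq'
  set r := G 1 1 with hr
  set c := Real.sqrt (2 * (p + r)) with hc
  have hc2 : c ^ 2 = 2 * (p + r) := Real.sq_sqrt (by linarith)
  have hc0 : 0 < c := Real.sqrt_pos.mpr (by linarith)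
  have hcne : c ≠ 0 := ne_of_gt hc0
  have hT : (!![1/c, c/2; e/c, -(e*c)/2])ᵀ = !![1/c, e/c; c/2, -(e*c)/2] := by
    ext i j
    fin_cases i <;> fin_cases j <;> simp [Matrix.transpose_apply]
  refine ⟨!![1/c, c/2; e/c, -(e*c)/2], (p - r)/2, ?_, ?_, ?_⟩
  · rw [Matrix.isUnit_iff_isUnit_det, Matrix.det_fin_two_of, isUnit_iff_ne_zero]
    have hd : 1 / c * (-(e * c) / 2) - c / 2 * (e / c) = -e := by field_simp; ring
    rw [hd]
    intro h0
    rw [neg_eq_zero] at h0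
    rw [h0] at he
    norm_num at he
  · rw [hT]
    ext i j
    fin_cases i <;> fin_cases j <;>
      · simp [Jmat, Matrix.mul_apply, Fin.sum_univ_two]
        field_simp
        nlinarith [he, hc2]
  · rw [hT]
    ext i j
    fin_cases i <;> fin_cases j <;>
        simp [Matrix.mul_apply, Matrix.vecMul, dotProduct, Fin.sum_univ_two,
          hq, ← hp, ← hq', ← hr] <;>
        field_simp
    · linear_combination r * he - hsum - hc2
    · linear_combination (-r) * he
    · linear_combination (-r) * he
    · linear_combination c^2 * hsum + c^2 * r * he

/-- Theorem 3.4: if `(tr F)² = 4 det F` and `G₀₀ + G₁₁ > 0` (i.e. `σ = 1`), then in a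
suitable basis the metrics are presented by `(0, 1; 1, 0)` and `(1, a; a, 0)`. -/
theorem canonical_form_sigma_pos (G : Matrix (Fin 2) (Fin 2) ℝ) (hG : Gᵀ = G)
    (F : Matrix (Fin 2) (Fin 2) ℝ) (hF : F = Jmat * G)
    (h : F.trace ^ 2 = 4 * F.det) (hσ : G 0 0 + G 1 1 > 0) :
    ∃ S : Matrix (Fin 2) (Fin 2) ℝ, ∃ a : ℝ, IsUnit S ∧
      Sᵀ * Jmat * S = !![0, 1; 1, 0] ∧ Sᵀ * G * S = !![1, a; a, 0] := by
  have hq : G 1 0 = G 0 1 := by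
    conv_lhs => rw [← hG]
    rfl
  set p := G 0 0
  set q := G 0 1
  set r := G 1 1
  have hFeq : F = !![p, q; -q, -r] := by
    subst hF
    ext i j
    fin_cases i <;> fin_cases j <;>
      simp [Jmat, Matrix.mul_apply, Fin.sum_univ_two, hq] <;> rfl
  have htr : F.trace = p - r := by rw [hFeq, Matrix.trace_fin_two_of]; ring
  have hdet : F.det = q ^ 2 - p * r := by rw [hFeq, Matrix.det_fin_two_of]; ring
  rw [htr, hdet] at h
  have hfac : (p + r - 2 * q) * (p + r + 2 * q) = 0 := by nlinarith
  rcases mul_eq_zero.mp hfac with h1 | h1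
  · exact key_lemma G 1 (by norm_num) hq (by linarith) hσ
  · exact key_lemma G (-1) (by norm_num) hq (by linarith) hσ
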